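/- Transaction feasibility count in trees: let T be a tree (a connected acyclic simple graph) on a finite vertex type V with m edges, let c ≥ 1 be an integer, and consider the credit network with cap u v = c if u and v are adjacent in T and cap u v = 0 otherwise. Fix vertices s ≠ t at tree-distance l in T. Then the number of states σ of this network in which the unit transaction (s,t) is feasible equals c^l · (c+1)^{m−l}. Since the total number of states is (c+1)^m, under the uniform distribution on states the probability that the unit transaction (s,t) is feasible equals (c/(c+1))^l. -/

import Mathlib

set_option linter.unusedSectionVars false
set_option maxHeartbeats 1000000


open Finset

/-- A state of a credit network with capacities `cap`: `σ u v + σ v u = cap u v`. -/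
def IsState {V : Type*} (cap σ : V → V → ℕ) : Prop :=
  ∀ u v : V, σ u v + σ v u = cap u v

/-- The score vector of a state: total capacity on outgoing edges of each vertex. -/
def score {V : Type*} [Fintype V] (σ : V → V → ℕ) (v : V) : ℕ := ∑ u, σ v u

/-- `u : Fin (k+1) → V` is a feasible path for a unit payment from `s` to `t` in state `σ`. -/
def FeasiblePath {V : Type*} (σ : V → V → ℕ) (s t : V) (k : ℕ) (u : Fin (k + 1) → V) : Prop :=
  1 ≤ k ∧ Function.Injective u ∧ u 0 = s ∧ u (Fin.last k) = t ∧
    ∀ i : Fin k, 1 ≤ σ (u i.succ) (u i.castSucc)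

/-- The unit transaction `(s,t)` is feasible in `σ`. -/
def Feasible {V : Type*} (σ : V → V → ℕ) (s t : V) : Prop :=
  ∃ (k : ℕ) (u : Fin (k + 1) → V), FeasiblePath σ s t k u

/-- `σ'` is the result of routing a unit payment along the path `u` in `σ`. -/
def RouteResult {V : Type*} (σ σ' : V → V → ℕ) (k : ℕ) (u : Fin (k + 1) → V) : Prop :=
  (∀ i : Fin k,
      σ' (u i.succ) (u i.castSucc) = σ (u i.succ) (u i.castSucc) - 1 ∧
      σ' (u i.castSucc) (u i.succ) = σ (u i.castSucc) (u i.succ) + 1) ∧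
  ∀ x y : V,
    (∀ i : Fin k, ¬(x = u i.succ ∧ y = u i.castSucc) ∧ ¬(x = u i.castSucc ∧ y = u i.succ)) →
    σ' x y = σ x y

/-- `σ'` is obtained from `σ` by routing a unit payment from `s` to `t` along some feasible path. -/
def RoutesUnit {V : Type*} (σ σ' : V → V → ℕ) (s t : V) : Prop :=
  ∃ (k : ℕ) (u : Fin (k + 1) → V), FeasiblePath σ s t k u ∧ RouteResult σ σ' k u

namespace CreditAux

open SimpleGraph

lemma support_eq_map_getVert {V : Type*} {G : SimpleGraph V} {x y : V} (p : G.Walk x y) :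
    p.support = (List.range (p.length + 1)).map p.getVert := by
  induction p with
  | nil => simp [List.range_succ]
  | @cons a b w h q ih =>
    rw [Walk.support_cons, ih, Walk.length_cons]
    conv_rhs => rw [List.range_succ_eq_map]
    simp [List.map_map, Function.comp_def, Walk.getVert_cons_succ]

lemma getVert_injOn_of_isPath {V : Type*} {G : SimpleGraph V} {x y : V} {p : G.Walk x y}
    (hp : p.IsPath) {i j : ℕ} (hi : i ≤ p.length) (hj : j ≤ p.length)
    (h : p.getVert i = p.getVert j) : i = j := by
  have hnd := hp.support_nodup
  rw [support_eq_map_getVert] at hnd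
  have := (List.nodup_map_iff_inj_on List.nodup_range).mp hnd
  exact this i (List.mem_range.mpr (by omega)) j (List.mem_range.mpr (by omega)) h

lemma isPath_of_getVert_injOn {V : Type*} {G : SimpleGraph V} {x y : V} {p : G.Walk x y}
    (h : ∀ i ≤ p.length, ∀ j ≤ p.length, p.getVert i = p.getVert j → i = j) : p.IsPath := by
  rw [Walk.isPath_def, support_eq_map_getVert]
  refine List.nodup_range.map_on fun i hi j hj hij => ?_
  rw [List.mem_range] at hi hj
  exact h i (by omega) j (by omega) hij

lemma exists_walk_of_chain {V : Type*} {G : SimpleGraph V} :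
    ∀ (k : ℕ) (u : ℕ → V), (∀ i < k, G.Adj (u i) (u (i + 1))) →
      ∃ q : G.Walk (u 0) (u k), q.length = k ∧ ∀ j, q.getVert j = u (min j k) := by
  intro k
  induction k with
  | zero => exact fun u _ => ⟨Walk.nil, rfl, fun j => by simp [Walk.getVert]⟩
  | succ k ih =>
    intro u h
    obtain ⟨q, hql, hqv⟩ := ih (fun n => u (n + 1)) (fun i hi => h (i + 1) (by omega))
    refine ⟨Walk.cons (h 0 (by omega)) q, by simp [hql], fun j => ?_⟩
    cases j with
    | zero => simp
    | succ j =>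
      rw [Walk.getVert_cons_succ, hqv j]
      congr 1
      omega

lemma adj_of_pos {V : Type*} {T : SimpleGraph V} [DecidableRel T.Adj] {c : ℕ} {σ : V → V → ℕ}
    (hσ : IsState (fun u v => if T.Adj u v then c else 0) σ) {x y : V} (h : 1 ≤ σ x y) :
    T.Adj x y := by
  by_contra hadj
  have := hσ x y
  simp only [hadj, if_false] at this
  omega

lemma feasible_iff_path_cond {V : Type*} {T : SimpleGraph V} [DecidableRel T.Adj]
    (hacyc : T.IsAcyclic) {c : ℕ} {σ : V → V → ℕ}
    (hσ : IsState (fun u v => if T.Adj u v then c else 0) σ)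
    {s t : V} (hst : s ≠ t) {p : T.Walk s t} (hp : p.IsPath) :
    Feasible σ s t ↔ ∀ i < p.length, 1 ≤ σ (p.getVert (i + 1)) (p.getVert i) := by
  constructor
  · rintro ⟨k, u, hk, hinj, hu0, hul, hcond⟩
    set w : ℕ → V := fun n => if h : n ≤ k then u ⟨n, by omega⟩ else u (Fin.last k) with hw
    have hwk : ∀ {n} (h : n ≤ k), w n = u ⟨n, by omega⟩ := fun {n} h => dif_pos h
    have hadj : ∀ i < k, T.Adj (w i) (w (i + 1)) := by
      intro i hi
      rw [hwk (by omega), hwk (by omega)]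
      have := hcond ⟨i, hi⟩
      have h1 := adj_of_pos hσ this
      exact h1.symm
    obtain ⟨q, hql, hqv⟩ := exists_walk_of_chain k w hadj
    have hw0 : w 0 = s := by rw [hwk (by omega)]; exact hu0
    have hwkk : w k = t := by rw [hwk le_rfl]; exact hul
    have hqpath : q.IsPath := by
      apply isPath_of_getVert_injOn
      intro i hi j hj hij
      rw [hql] at hi hj
      rw [hqv, hqv, hwk (by omega : min i k ≤ k), hwk (by omega : min j k ≤ k)] at hij
      have h2 : i ⊓ k = j ⊓ k := congrArg Fin.val (hinj hij)
      omega
    let q' : T.Walk s t := (q.copy hw0 hwkk)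
    have hq'path : q'.IsPath := (Walk.isPath_copy q hw0 hwkk).mpr hqpath
    have hpq : q' = p := by
      have := hacyc.path_unique ⟨q', hq'path⟩ ⟨p, hp⟩
      exact congrArg Subtype.val this
    intro i hi
    rw [← hpq] at hi ⊢
    have hlen : q'.length = k := by simp [q', hql]
    rw [hlen] at hi
    have h1 : q'.getVert (i + 1) = u ⟨i + 1, by omega⟩ := by
      simp only [q', Walk.getVert_copy, hqv]
      rw [hwk (by omega : min (i+1) k ≤ k)]
      congr 1
      simp [Fin.mk.injEq]
      omega
    have h0 : q'.getVert i = u ⟨i, by omega⟩ := by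
      simp only [q', Walk.getVert_copy, hqv]
      rw [hwk (by omega : min i k ≤ k)]
      congr 1
      simp [Fin.mk.injEq]
      omega
    rw [h1, h0]
    have := hcond ⟨i, hi⟩
    convert this using 3 <;> rfl
  · intro h
    have hk : 1 ≤ p.length := by
      rcases Nat.eq_zero_or_pos p.length with h0 | h1
      · exfalso; apply hst
        have := p.getVert_length
        rw [h0] at this
        rw [← p.getVert_zero, this]
      · exact h1
    refine ⟨p.length, fun i => p.getVert i, hk, ?_, by simp, by simp [Fin.last], ?_⟩
    · intro i j hij
      exact Fin.ext (getVert_injOn_of_isPath hp (by omega) (by omega) hij)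
    · intro i
      have := h i i.isLt
      simpa using this

variable {V : Type*} [Fintype V] [DecidableEq V] (T : SimpleGraph V) [DecidableRel T.Adj] (c : ℕ)

lemma mem_edgeFinset_of_adj {u v : V} (h : T.Adj u v) : s(u, v) ∈ T.edgeFinset := by
  simp [SimpleGraph.mem_edgeFinset, h]

lemma out_mk_or {u v : V} (h : T.Adj u v) :
    (s(u, v) : Sym2 V).out = (u, v) ∨ (s(u, v) : Sym2 V).out = (v, u) := by
  have h1 : Quot.mk (Sym2.Rel V) (s(u, v) : Sym2 V).out = s(u, v) := Quot.out_eq _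
  rw [← Prod.mk.eta (p := (s(u, v) : Sym2 V).out)] at h1
  rw [Sym2.eq_iff] at h1
  rcases h1 with ⟨h1, h2⟩ | ⟨h1, h2⟩
  · left; exact Prod.ext h1 h2
  · right; exact Prod.ext h1 h2

lemma adj_out {e : Sym2 V} (he : e ∈ T.edgeFinset) : T.Adj e.out.1 e.out.2 := by
  rw [SimpleGraph.mem_edgeFinset] at he
  have h1 : Quot.mk (Sym2.Rel V) e.out = e := Quot.out_eq _
  rw [← h1, ← Prod.mk.eta (p := e.out), SimpleGraph.mem_edgeSet] at he
  exact he

noncomputable def Fmap : (V → V → ℕ) → (↥T.edgeFinset → ℕ) := fun σ e => σ e.1.out.1 e.1.out.2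

noncomputable def Gmap : (↥T.edgeFinset → ℕ) → (V → V → ℕ) := fun f u v =>
  if h : T.Adj u v then
    (if (s(u, v) : Sym2 V).out = (u, v) then f ⟨s(u, v), mem_edgeFinset_of_adj T h⟩
     else c - f ⟨s(u, v), mem_edgeFinset_of_adj T h⟩)
  else 0

lemma state_sum {σ : V → V → ℕ} (hσ : IsState (fun u v => if T.Adj u v then c else 0) σ)
    {u v : V} (h : T.Adj u v) : σ u v + σ v u = c := by
  have := hσ u v
  simpa [h] using this

lemma state_zero {σ : V → V → ℕ} (hσ : IsState (fun u v => if T.Adj u v then c else 0) σ)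
    {u v : V} (h : ¬ T.Adj u v) : σ u v = 0 := by
  have := hσ u v
  simp only [h, if_false] at this
  omega

lemma Gmap_isState (f : ↥T.edgeFinset → ℕ) (hf : ∀ e, f e ≤ c) :
    IsState (fun u v => if T.Adj u v then c else 0) (Gmap T c f) := by
  intro u v
  by_cases h : T.Adj u v
  · have hne : u ≠ v := h.ne
    have hsw : (s(v, u) : Sym2 V) = s(u, v) := Sym2.eq_swap
    have hkey : (⟨s(v, u), mem_edgeFinset_of_adj T h.symm⟩ : ↥T.edgeFinset) =
        ⟨s(u, v), mem_edgeFinset_of_adj T h⟩ := Subtype.ext hsw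
    simp only [Gmap, dif_pos h, dif_pos h.symm, if_pos h]
    have := hf ⟨s(u, v), mem_edgeFinset_of_adj T h⟩
    rcases out_mk_or T h with ho | ho
    · have ho' : ¬ (s(v, u) : Sym2 V).out = (v, u) := by
        intro hh; rw [hsw, ho] at hh
        exact hne (congrArg Prod.fst hh)
      rw [if_pos ho, if_neg ho', hkey]
      omega
    · have ho1 : ¬ (s(u, v) : Sym2 V).out = (u, v) := by
        intro hh; rw [ho] at hh
        exact hne (congrArg Prod.fst hh).symm
      have ho2 : (s(v, u) : Sym2 V).out = (v, u) := by rw [hsw, ho]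
      rw [if_neg ho1, if_pos ho2, hkey]
      omega
  · have h' : ¬ T.Adj v u := fun hh => h hh.symm
    simp only [Gmap, dif_neg h, dif_neg h', if_neg h]

lemma Fmap_Gmap (f : ↥T.edgeFinset → ℕ) : Fmap T (Gmap T c f) = f := by
  funext e
  obtain ⟨e, he⟩ := e
  have hadj : T.Adj e.out.1 e.out.2 := adj_out T he
  have hmk : (s(e.out.1, e.out.2) : Sym2 V) = e := by
    exact Quot.out_eq _
  have hout : (s(e.out.1, e.out.2) : Sym2 V).out = (e.out.1, e.out.2) := by
    rw [hmk, Prod.mk.eta]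
  simp only [Fmap, Gmap, dif_pos hadj, if_pos hout]
  congr 1
  exact Subtype.ext hmk

lemma Fmap_bound {σ : V → V → ℕ} (hσ : IsState (fun u v => if T.Adj u v then c else 0) σ)
    (e : ↥T.edgeFinset) : Fmap T σ e ≤ c := by
  have := state_sum T c hσ (adj_out T e.2)
  simp only [Fmap]
  omega

lemma Fmap_inj {σ σ' : V → V → ℕ} (hσ : IsState (fun u v => if T.Adj u v then c else 0) σ)
    (hσ' : IsState (fun u v => if T.Adj u v then c else 0) σ')
    (h : Fmap T σ = Fmap T σ') : σ = σ' := by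
  funext u v
  by_cases hadj : T.Adj u v
  · have hs := state_sum T c hσ hadj
    have hs' := state_sum T c hσ' hadj
    have happ : ∀ a b : V, (hab : T.Adj a b) → ((s(a,b) : Sym2 V).out = (a, b)) → σ a b = σ' a b := by
      intro a b hab hout
      have := congrFun h ⟨s(a, b), mem_edgeFinset_of_adj T hab⟩
      simpa only [Fmap, hout] using this
    rcases out_mk_or T hadj with ho | ho
    · exact happ u v hadj ho
    · have : σ v u = σ' v u := by
        apply happ v u hadj.symm
        rw [Sym2.eq_swap]; exact ho
      omega
  · rw [state_zero T c hσ hadj, state_zero T c hσ' hadj]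

end CreditAux

open CreditAux SimpleGraph

/-- Transaction feasibility count in trees: in the credit network on a tree `T` with each
edge of total capacity `c`, the number of states in which the unit transaction `(s,t)` is
feasible is `c^l * (c+1)^(m-l)` where `l` is the tree-distance from `s` to `t` and `m` is
the number of edges; the total number of states is `(c+1)^m`. -/
theorem stmt9 {V : Type*} [Fintype V] [DecidableEq V]
    (T : SimpleGraph V) [DecidableRel T.Adj]
    (hconn : T.Connected) (hacyc : T.IsAcyclic)
    (c : ℕ) (hc : 1 ≤ c) (s t : V) (hst : s ≠ t) :
    {σ : V → V → ℕ |
        IsState (fun u v => if T.Adj u v then c else 0) σ ∧ Feasible σ s t}.ncard =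
      c ^ (T.dist s t) * (c + 1) ^ (T.edgeFinset.card - T.dist s t) ∧
    {σ : V → V → ℕ | IsState (fun u v => if T.Adj u v then c else 0) σ}.ncard =
      (c + 1) ^ T.edgeFinset.card := by
  -- the canonical path from s to t
  obtain ⟨w0, hw0⟩ := hconn.exists_walk_length_eq_dist s t
  set p : T.Walk s t := w0.bypass with hpdef
  have hp : p.IsPath := w0.bypass_isPath
  have hplen : p.length = T.dist s t :=
    le_antisymm (hw0 ▸ Walk.length_bypass_le w0) (SimpleGraph.dist_le p)
  set l := p.length with hldef
  set vv : ℕ → V := p.getVert with hvv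
  have hadj_i : ∀ i < l, T.Adj (vv i) (vv (i + 1)) := fun i hi => p.adj_getVert_succ hi
  -- path edges
  set PE : Finset (Sym2 V) := (Finset.range l).image (fun i => s(vv i, vv (i + 1))) with hPEdef
  have hedge_inj : ∀ i < l, ∀ j < l, s(vv i, vv (i + 1)) = s(vv j, vv (j + 1)) → i = j := by
    intro i hi j hj hij
    rw [Sym2.eq_iff] at hij
    rcases hij with ⟨h1, h2⟩ | ⟨h1, h2⟩
    · exact getVert_injOn_of_isPath hp (by omega) (by omega) h1
    · have e1 : i = j + 1 := getVert_injOn_of_isPath hp (by omega) (by omega) h1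
      have e2 : i + 1 = j := getVert_injOn_of_isPath hp (by omega) (by omega) h2
      omega
  have hPEsub : PE ⊆ T.edgeFinset := by
    intro e he
    rw [hPEdef, Finset.mem_image] at he
    obtain ⟨i, hi, rfl⟩ := he
    exact mem_edgeFinset_of_adj T (hadj_i i (Finset.mem_range.mp hi))
  have hPEcard : PE.card = l := by
    rw [hPEdef, Finset.card_image_of_injOn, Finset.card_range]
    intro i hi j hj hij
    exact hedge_inj i (Finset.mem_range.mp hi) j (Finset.mem_range.mp hj) hij
  have hlm : l ≤ T.edgeFinset.card := hPEcard ▸ Finset.card_le_card hPEsub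
  -- allowed-value finsets for each edge
  set A : Sym2 V → Finset ℕ := fun e => (Finset.range (c + 1)).filter
    (fun n => ∀ i, i < l → e = s(vv i, vv (i + 1)) →
      ((e.out = (vv i, vv (i + 1)) → n < c) ∧ (e.out ≠ (vv i, vv (i + 1)) → 1 ≤ n))) with hAdef
  -- cardinalities of allowed sets
  have hAcard_path : ∀ e ∈ PE, (A e).card = c := by
    intro e he
    rw [hPEdef, Finset.mem_image] at he
    obtain ⟨i0, hi0, he⟩ := he
    rw [Finset.mem_range] at hi0
    have hne0 : vv i0 ≠ vv (i0 + 1) := (hadj_i i0 hi0).ne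
    have hfc : A e = (Finset.range (c + 1)).filter
        (fun n => (e.out = (vv i0, vv (i0 + 1)) → n < c) ∧
          (e.out ≠ (vv i0, vv (i0 + 1)) → 1 ≤ n)) := by
      rw [hAdef]
      apply Finset.filter_congr
      intro n _
      constructor
      · intro hP
        exact hP i0 hi0 he.symm
      · intro hQ i hi hei
        have : i = i0 := hedge_inj i hi i0 hi0 (by rw [← hei, ← he])
        subst this
        exact hQ
    by_cases hout : e.out = (vv i0, vv (i0 + 1))
    · have : A e = Finset.range c := by
        rw [hfc]
        ext n
        simp only [Finset.mem_filter, Finset.mem_range, hout, ne_eq, not_true_eq_false,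
          false_implies, and_true, forall_const]
        omega
      rw [this, Finset.card_range]
    · have : A e = Finset.Ioo 0 (c + 1) := by
        rw [hfc]
        ext n
        simp only [Finset.mem_filter, Finset.mem_range, hout, ne_eq, not_false_eq_true,
          forall_const, false_implies, true_and, Finset.mem_Ioo]
        omega
      rw [this, Nat.card_Ioo]
      omega
  have hAcard_non : ∀ e ∈ T.edgeFinset \ PE, (A e).card = c + 1 := by
    intro e he
    rw [Finset.mem_sdiff] at he
    have hnot : ∀ i < l, e ≠ s(vv i, vv (i + 1)) := by
      intro i hi hei
      exact he.2 (by rw [hPEdef, Finset.mem_image]; exact ⟨i, Finset.mem_range.mpr hi, hei.symm⟩)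
    have : A e = Finset.range (c + 1) := by
      rw [hAdef]
      ext n
      simp only [Finset.mem_filter, Finset.mem_range, and_iff_left_iff_imp]
      intro _ i hi hei
      exact absurd hei (hnot i hi)
    rw [this, Finset.card_range]
  -- correspondence between directional path conditions and edge-value constraints
  have hcorr : ∀ σ : V → V → ℕ, IsState (fun u v => if T.Adj u v then c else 0) σ →
      ((∀ i < l, 1 ≤ σ (vv (i + 1)) (vv i)) ↔ ∀ e : ↥T.edgeFinset, Fmap T σ e ∈ A e.1) := by
    intro σ hσ
    constructor
    · intro hdir e
      rw [hAdef, Finset.mem_filter, Finset.mem_range]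
      refine ⟨Nat.lt_succ_of_le (Fmap_bound T c hσ e), ?_⟩
      obtain ⟨e, he⟩ := e
      intro i hi hei
      subst hei
      have hadj := hadj_i i hi
      have hsum := state_sum T c hσ hadj
      have hd := hdir i hi
      constructor
      · intro hout
        simp only [Fmap, hout]
        omega
      · intro hout
        rcases out_mk_or T hadj with ho | ho
        · exact absurd ho hout
        · simp only [Fmap, ho]
          exact hd
    · intro hall i hi
      have hadj := hadj_i i hi
      have hsum := state_sum T c hσ hadj
      have h := hall ⟨s(vv i, vv (i + 1)), mem_edgeFinset_of_adj T hadj⟩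
      rw [hAdef, Finset.mem_filter] at h
      have hP := h.2 i hi rfl
      rcases out_mk_or T hadj with ho | ho
      · have := hP.1 ho
        simp only [Fmap, ho] at this
        omega
      · have hne : (s(vv i, vv (i + 1)) : Sym2 V).out ≠ (vv i, vv (i + 1)) := by
          rw [ho]
          intro hh
          exact hadj.ne (congrArg Prod.fst hh).symm
        have := hP.2 hne
        simp only [Fmap, ho] at this
        exact this
  -- total count
  have htotal : {σ : V → V → ℕ | IsState (fun u v => if T.Adj u v then c else 0) σ}.ncard =
      (c + 1) ^ T.edgeFinset.card := by
    have hbij : Set.BijOn (Fmap T)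
        {σ : V → V → ℕ | IsState (fun u v => if T.Adj u v then c else 0) σ}
        {f : ↥T.edgeFinset → ℕ | ∀ e, f e ∈ Finset.range (c + 1)} := by
      refine ⟨fun σ hσ e => ?_, fun σ hσ σ' hσ' h => Fmap_inj T c hσ hσ' h, fun f hf => ?_⟩
      · rw [Finset.mem_range]
        exact Nat.lt_succ_of_le (Fmap_bound T c hσ e)
      · refine ⟨Gmap T c f, Gmap_isState T c f (fun e => ?_), Fmap_Gmap T c f⟩
        have := hf e
        rw [Finset.mem_range] at this
        omega
    rw [← Nat.card_coe_set_eq, Nat.card_congr (hbij.equiv _), Nat.card_coe_set_eq]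
    have hset : {f : ↥T.edgeFinset → ℕ | ∀ e, f e ∈ Finset.range (c + 1)} =
        ↑(Fintype.piFinset (fun _ : ↥T.edgeFinset => Finset.range (c + 1))) := by
      ext f
      simp [Fintype.mem_piFinset]
    rw [hset, Set.ncard_coe_finset, Fintype.card_piFinset]
    simp [Finset.card_range, Finset.prod_const, Fintype.card_coe]
  refine ⟨?_, htotal⟩
  -- feasible count
  have hbij : Set.BijOn (Fmap T)
      {σ : V → V → ℕ | IsState (fun u v => if T.Adj u v then c else 0) σ ∧ Feasible σ s t}
      {f : ↥T.edgeFinset → ℕ | ∀ e, f e ∈ A e.1} := by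
    refine ⟨fun σ hσ e => ?_, fun σ hσ σ' hσ' h => Fmap_inj T c hσ.1 hσ'.1 h, fun f hf => ?_⟩
    · exact (hcorr σ hσ.1).mp ((feasible_iff_path_cond hacyc hσ.1 hst hp).mp hσ.2) e
    · have hf0 : ∀ e, f e ≤ c := by
        intro e
        have := hf e
        rw [hAdef, Finset.mem_filter, Finset.mem_range] at this
        omega
      have hstate := Gmap_isState T c f hf0
      refine ⟨Gmap T c f, ⟨hstate, ?_⟩, Fmap_Gmap T c f⟩
      rw [feasible_iff_path_cond hacyc hstate hst hp]
      rw [show p.length = l from rfl]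
      exact (hcorr _ hstate).mpr (by rw [Fmap_Gmap T c f]; exact hf)
  rw [← Nat.card_coe_set_eq, Nat.card_congr (hbij.equiv _), Nat.card_coe_set_eq]
  have hset : {f : ↥T.edgeFinset → ℕ | ∀ e, f e ∈ A e.1} =
      ↑(Fintype.piFinset (fun e : ↥T.edgeFinset => A e.1)) := by
    ext f
    simp [Fintype.mem_piFinset]
  rw [hset, Set.ncard_coe_finset, Fintype.card_piFinset]
  have hprod : ∏ e : ↥T.edgeFinset, (A e.1).card = ∏ e ∈ T.edgeFinset, (A e).card :=
    Finset.prod_coe_sort T.edgeFinset (fun e => (A e).card)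
  rw [hprod, ← Finset.prod_sdiff hPEsub]
  rw [Finset.prod_congr rfl hAcard_non, Finset.prod_congr rfl hAcard_path]
  rw [Finset.prod_const, Finset.prod_const, hPEcard, Finset.card_sdiff_of_subset hPEsub, hPEcard]
  rw [← hplen]
  ring
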